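/- The Virasoro module V_{0,0} has a unique nontrivial proper submodule, namely the one-dimensional subspace ℂ v_0. -/

import Mathlib

open Finsupp TensorProduct

noncomputable section

/-- The underlying space of the Virasoro algebra: coordinates on the basis
`{d_n : n ∈ ℤ}` together with the coefficient of the central element `C`. -/
abbrev VirCarrier : Type := (ℤ →₀ ℂ) × ℂ

/-- The basis element `d_n`. -/
def dGen (n : ℤ) : VirCarrier := (Finsupp.single n 1, 0)

/-- The central element `C`. -/
def cGen : VirCarrier := (0, 1)

/-- `[d_m, d_n] = (n-m) d_{m+n} + δ_{m,-n} ((m³-m)/12) C`. -/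
def dBracket (m n : ℤ) : VirCarrier :=
  (Finsupp.single (m + n) ((n : ℂ) - (m : ℂ)), if m = -n then ((m : ℂ) ^ 3 - (m : ℂ)) / 12 else 0)

/-- The bilinear extension of the bracket on basis elements; the central element `C`
brackets to zero with everything (`[d_n, C] = 0`). -/
def virBracket (x y : VirCarrier) : VirCarrier :=
  x.1.sum fun m a => y.1.sum fun n b => (a * b) • dBracket m n

/-- Action of `d_n` on `V_{α,β}`: `d_n · v_k = (α + k + nβ) v_{k+n}`, where `v_k` is the
basis element `Finsupp.single k 1`. -/
def dAct (α β : ℂ) (n : ℤ) : Module.End ℂ (ℤ →₀ ℂ) :=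
  Finsupp.lsum ℂ fun k => (α + (k : ℂ) + (n : ℂ) * β) • Finsupp.lsingle (k + n)

/-- The action of the Virasoro algebra on the intermediate series module `V_{α,β}`;
`C` acts by zero. -/
def vabAction (α β : ℂ) : VirCarrier →ₗ[ℂ] Module.End ℂ (ℤ →₀ ℂ) :=
  (Finsupp.lsum ℂ fun n =>
    LinearMap.toSpanSingleton ℂ (Module.End ℂ (ℤ →₀ ℂ)) (dAct α β n)).comp
    (LinearMap.fst ℂ (ℤ →₀ ℂ) ℂ)

/-- A subspace invariant under an action. -/
def ActInvariant {L V : Type*} [AddCommGroup V] [Module ℂ V]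
    (act : L → Module.End ℂ V) (U : Submodule ℂ V) : Prop :=
  ∀ x : L, ∀ v ∈ U, act x v ∈ U

/-- Irreducibility: the only invariant subspaces are `⊥` and `⊤`. -/
def ActIrreducible {L V : Type*} [AddCommGroup V] [Module ℂ V]
    (act : L → Module.End ℂ V) : Prop :=
  ∀ U : Submodule ℂ V, ActInvariant act U → U = ⊥ ∨ U = ⊤

/-- The set `S` generates the module: any invariant subspace containing `S` is everything. -/
def ActGenerates {L V : Type*} [AddCommGroup V] [Module ℂ V]
    (act : L → Module.End ℂ V) (S : Set V) : Prop :=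
  ∀ U : Submodule ℂ V, ActInvariant act U → S ⊆ U → U = ⊤

lemma dAct_single (n k : ℤ) (c : ℂ) :
    dAct 0 0 n (Finsupp.single k c) = (k : ℂ) • Finsupp.single (k + n) c := by
  rw [dAct, Finsupp.lsum_single]
  simp only [LinearMap.smul_apply, Finsupp.lsingle_apply, Finsupp.smul_single,
    add_zero, zero_add, mul_zero, smul_eq_mul, mul_one]

lemma dAct_zero_apply (u : ℤ →₀ ℂ) (j : ℤ) : dAct 0 0 0 u j = (j : ℂ) * u j := by
  rw [dAct, Finsupp.lsum_apply, Finsupp.sum_apply, Finsupp.sum]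
  simp only [LinearMap.smul_apply, Finsupp.lsingle_apply, Finsupp.smul_single,
    Finsupp.single_apply, add_zero, zero_add, mul_zero, smul_eq_mul]
  rw [Finset.sum_eq_single j]
  · simp
  · intro b _ hb; simp [hb]
  · intro hj; simp [Finsupp.notMem_support_iff.mp hj]

lemma vab_dGen (n : ℤ) : vabAction 0 0 (dGen n) = dAct 0 0 n := by
  rw [vabAction, dGen, LinearMap.comp_apply]
  rw [LinearMap.fst_apply, Finsupp.lsum_single, LinearMap.toSpanSingleton_apply, one_smul]

lemma vab_apply (x : VirCarrier) (u : ℤ →₀ ℂ) :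
    vabAction 0 0 x u = x.1.sum fun n a => a • dAct 0 0 n u := by
  rw [vabAction]
  simp only [LinearMap.comp_apply, LinearMap.fst_apply, Finsupp.lsum_apply]
  rw [Finsupp.sum, Finsupp.sum, LinearMap.coe_sum, Finset.sum_apply]
  simp [LinearMap.toSpanSingleton_apply]

/-- Projection: an invariant subspace contains each graded component of its elements. -/
lemma proj_mem (U : Submodule ℂ (ℤ →₀ ℂ))
    (hU : ActInvariant (fun x => vabAction 0 0 x) U) :
    ∀ u ∈ U, ∀ k : ℤ, Finsupp.single k (u k) ∈ U := by
  have H : ∀ N : ℕ, ∀ u ∈ U, u.support.card = N → ∀ k : ℤ, Finsupp.single k (u k) ∈ U := by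
    intro N
    induction N using Nat.strong_induction_on with
    | _ N ih =>
    intro u hu hn k
    rcases Nat.eq_zero_or_pos N with h0 | hpos
    · subst h0
      have : u = 0 := by
        rwa [Finset.card_eq_zero, Finsupp.support_eq_empty] at hn
      simp [this]
    · obtain ⟨k0, hk0⟩ : ∃ k0, k0 ∈ u.support :=
        Finset.card_pos.mp (hn ▸ hpos)
      set w : ℤ →₀ ℂ := vabAction 0 0 (dGen 0) u - (k0 : ℂ) • u with hw
      have hwU : w ∈ U := U.sub_mem (hU (dGen 0) u hu) (U.smul_mem _ hu)
      have hwval : ∀ j, w j = ((j : ℂ) - (k0 : ℂ)) * u j := by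
        intro j
        simp [hw, vab_dGen, dAct_zero_apply, sub_mul]
      have hsupp : w.support ⊆ u.support.erase k0 := by
        intro j hj
        rw [Finsupp.mem_support_iff] at hj
        rw [hwval] at hj
        rcases mul_ne_zero_iff.mp hj with ⟨h1, h2⟩
        refine Finset.mem_erase.mpr ⟨?_, Finsupp.mem_support_iff.mpr h2⟩
        intro hjj; subst hjj; simp at h1
      have hcard : w.support.card < N := by
        calc w.support.card ≤ (u.support.erase k0).card := Finset.card_le_card hsupp
          _ < u.support.card := Finset.card_erase_lt_of_mem hk0
          _ = N := hn
      have hwproj : ∀ j, Finsupp.single j (w j) ∈ U :=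
        ih w.support.card hcard w hwU rfl
      have hcomp : ∀ j : ℤ, j ≠ k0 → Finsupp.single j (u j) ∈ U := by
        intro j hj
        have hne : ((j : ℂ) - (k0 : ℂ)) ≠ 0 := by
          intro h
          exact hj (by exact_mod_cast sub_eq_zero.mp h)
        have := U.smul_mem (((j : ℂ) - (k0 : ℂ))⁻¹) (hwproj j)
        rwa [hwval, Finsupp.smul_single, smul_eq_mul, inv_mul_cancel_left₀ hne] at this
      rcases eq_or_ne k k0 with rfl | hkk
      · have hmem : u - ∑ j ∈ u.support.erase k, Finsupp.single j (u j) ∈ U := by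
          refine U.sub_mem hu (Submodule.sum_mem U ?_)
          intro j hj
          exact hcomp j (Finset.ne_of_mem_erase hj)
        have heq : u - ∑ j ∈ u.support.erase k, Finsupp.single j (u j)
            = Finsupp.single k (u k) := by
          ext m
          rw [Finsupp.sub_apply, Finset.sum_apply']
          simp only [Finsupp.single_apply]
          rw [Finset.sum_ite_eq' (u.support.erase k) m (fun j => u j)]
          rcases eq_or_ne m k with rfl | hm
          · rw [if_pos rfl, if_neg (by simp), sub_zero]
          · rw [if_neg (fun h : k = m => hm h.symm)]
            by_cases hmem2 : m ∈ u.support.erase k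
            · rw [if_pos hmem2, sub_self]
            · rw [if_neg hmem2, sub_zero]
              exact Finsupp.notMem_support_iff.mp
                (fun hms => hmem2 (Finset.mem_erase.mpr ⟨hm, hms⟩))
        rwa [heq] at hmem
      · exact hcomp k hkk
  intro u hu k
  exact H _ u hu rfl k
lemma vab_v0 (x : VirCarrier) : vabAction 0 0 x (Finsupp.single (0:ℤ) (1:ℂ)) = 0 := by
  rw [vab_apply, Finsupp.sum]
  refine Finset.sum_eq_zero fun n _ => ?_
  rw [dAct_single]
  simp

lemma top_of_single (U : Submodule ℂ (ℤ →₀ ℂ))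
    (hU : ActInvariant (fun x => vabAction 0 0 x) U)
    (k : ℤ) (hk : k ≠ 0) (c : ℂ) (hc : c ≠ 0)
    (hmem : Finsupp.single k c ∈ U) : U = ⊤ := by
  have hall : ∀ m : ℤ, Finsupp.single m (1:ℂ) ∈ U := by
    intro m
    have h1 : vabAction 0 0 (dGen (m - k)) (Finsupp.single k c) ∈ U := hU _ _ hmem
    rw [vab_dGen, dAct_single] at h1
    have h2 : (k : ℂ) • Finsupp.single (k + (m - k)) c = Finsupp.single m ((k:ℂ) * c) := by
      rw [Finsupp.smul_single, smul_eq_mul]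
      congr 1
      omega
    rw [h2] at h1
    have hkc : (k : ℂ) * c ≠ 0 :=
      mul_ne_zero (by exact_mod_cast hk) hc
    have := U.smul_mem (((k:ℂ) * c)⁻¹) h1
    rwa [Finsupp.smul_single, smul_eq_mul, inv_mul_cancel₀ hkc] at this
  rw [Submodule.eq_top_iff']
  intro u
  have : u = ∑ j ∈ u.support, (u j) • Finsupp.single j (1:ℂ) := by
    conv_lhs => rw [← Finsupp.sum_single u]
    rw [Finsupp.sum]
    refine Finset.sum_congr rfl fun j _ => ?_
    rw [Finsupp.smul_single, smul_eq_mul, mul_one]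
  rw [this]
  exact Submodule.sum_mem U fun j _ => U.smul_mem _ (hall j)

/-- `V_{0,0}` has a unique nontrivial proper submodule, namely `ℂ v_0`. -/
theorem v00_unique_submodule :
    ActInvariant (fun x => vabAction 0 0 x)
        (Submodule.span ℂ {Finsupp.single (0 : ℤ) (1 : ℂ)}) ∧
    Submodule.span ℂ {Finsupp.single (0 : ℤ) (1 : ℂ)} ≠ ⊥ ∧
    Submodule.span ℂ {Finsupp.single (0 : ℤ) (1 : ℂ)} ≠ ⊤ ∧
    (∀ U : Submodule ℂ (ℤ →₀ ℂ), ActInvariant (fun x => vabAction 0 0 x) U →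
      U ≠ ⊥ → U ≠ ⊤ → U = Submodule.span ℂ {Finsupp.single (0 : ℤ) (1 : ℂ)}) := by
  refine ⟨?_, ?_, ?_, ?_⟩
  · intro x v hv
    rcases Submodule.mem_span_singleton.mp hv with ⟨c, rfl⟩
    rw [map_smul, vab_v0, smul_zero]
    exact Submodule.zero_mem _
  · rw [Ne, Submodule.span_singleton_eq_bot]
    exact fun h => one_ne_zero (Finsupp.single_eq_zero.mp h)
  · intro h
    have h1 : Finsupp.single (1:ℤ) (1:ℂ) ∈ Submodule.span ℂ {Finsupp.single (0:ℤ) (1:ℂ)} := by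
      rw [h]; trivial
    rcases Submodule.mem_span_singleton.mp h1 with ⟨c, hc⟩
    have h2 := DFunLike.congr_fun hc 1
    rw [Finsupp.smul_apply, Finsupp.single_eq_of_ne' (by norm_num : (0:ℤ) ≠ 1),
      Finsupp.single_eq_same, smul_zero] at h2
    exact one_ne_zero h2.symm
  · intro U hU hbot htop
    have hz : ∀ u ∈ U, ∀ k : ℤ, k ≠ 0 → u k = 0 := by
      intro u hu k hk
      by_contra hne
      exact htop (top_of_single U hU k hk (u k) hne (proj_mem U hU u hu k))
    refine le_antisymm ?_ ?_
    · intro u hu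
      have : u = (u 0) • Finsupp.single (0:ℤ) (1:ℂ) := by
        rw [Finsupp.smul_single, smul_eq_mul, mul_one]
        ext m
        rcases eq_or_ne m 0 with rfl | hm
        · rw [Finsupp.single_eq_same]
        · rw [hz u hu m hm, Finsupp.single_eq_of_ne' (Ne.symm hm)]
      rw [this]
      exact Submodule.smul_mem _ _ (Submodule.mem_span_singleton_self _)
    · rw [Submodule.span_le, Set.singleton_subset_iff]
      rcases Submodule.ne_bot_iff U |>.mp hbot with ⟨u, hu, hune⟩
      have hu0 : u 0 ≠ 0 := by
        intro h0
        apply hune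
        ext m
        rcases eq_or_ne m 0 with rfl | hm
        · simpa using h0
        · simp [hz u hu m hm]
      have := U.smul_mem ((u 0)⁻¹) (proj_mem U hU u hu 0)
      rwa [Finsupp.smul_single, smul_eq_mul, inv_mul_cancel₀ hu0] at this
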